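/- Let C be a pointed category with finite limits and coequalizers. Then C satisfies property (P) if and only if: (a) the product of a regular epimorphism with an isomorphism is a regular epimorphism, and (b) for every effective equivalence relation (kernel pair of some morphism) R on a binary product A × B and all generalized elements x, y : S → A and z : S → B, if (x, 0) R (y, 0) then (x, z) R (y, z). -/

import Mathlib

open CategoryTheory Limits

/-- `q` is a coequalizer of the parallel pair `(u, v)`. -/
def IsCoeq {C : Type*} [Category C] {T X Q : C} (u v : T ⟶ X) (q : X ⟶ Q) : Prop :=
  ∃ h : u ≫ q = v ≫ q, Nonempty (IsColimit (Cofork.ofπ q h))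

/-- Property (P): the product of two coequalizer diagrams is a coequalizer diagram. -/
def PropertyP (C : Type*) [Category C] [HasBinaryProducts C] : Prop :=
  ∀ {T₁ T₂ X X' Y Y' : C} (u v : T₁ ⟶ X) (u' v' : T₂ ⟶ Y) (q₁ : X ⟶ X') (q₂ : Y ⟶ Y'),
    IsCoeq u v q₁ → IsCoeq u' v' q₂ →
      IsCoeq (prod.map u u') (prod.map v v') (prod.map q₁ q₂)

/-- A regular epimorphism: a coequalizer of some parallel pair. -/
def IsRegEpi {C : Type*} [Category C] {X Q : C} (q : X ⟶ Q) : Prop :=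
  ∃ (T : C) (a b : T ⟶ X), IsCoeq a b q

section Aux

variable {C : Type*} [Category C]

lemma isCoeq_self_id {T X : C} (f : T ⟶ X) : IsCoeq f f (𝟙 X) :=
  ⟨rfl, ⟨Cofork.IsColimit.mk _ (fun s => s.π) (fun s => by simp)
    (fun s m hm => by simpa using hm)⟩⟩

lemma isCoeq_id_id_of_iso {Y Y' : C} (g : Y ⟶ Y') [IsIso g] : IsCoeq (𝟙 Y) (𝟙 Y) g :=
  ⟨rfl, ⟨Cofork.IsColimit.mk _ (fun s => inv g ≫ s.π)
    (fun s => by simp)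
    (fun s m hm => by
      simp only [Cofork.π_ofπ] at hm
      rw [← hm]
      simp)⟩⟩

lemma IsCoeq.epi {T X Q : C} {u v : T ⟶ X} {q : X ⟶ Q} (h : IsCoeq u v q) : Epi q := by
  obtain ⟨hc, ⟨hl⟩⟩ := h
  exact ⟨fun f g hfg => Cofork.IsColimit.hom_ext hl (by simpa using hfg)⟩

lemma IsCoeq.desc {T X Q : C} {u v : T ⟶ X} {q : X ⟶ Q} (h : IsCoeq u v q)
    {W : C} (k : X ⟶ W) (hk : u ≫ k = v ≫ k) : ∃ t : Q ⟶ W, q ≫ t = k := by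
  obtain ⟨hc, ⟨hl⟩⟩ := h
  exact ⟨hl.desc (Cofork.ofπ k hk), by simpa using Cofork.IsColimit.π_desc hl (t := Cofork.ofπ k hk)⟩

variable [HasBinaryProducts C] [HasZeroMorphisms C]

/-- Condition (b), abbreviated. -/
def CondB (C : Type*) [Category C] [HasBinaryProducts C] [HasZeroMorphisms C] : Prop :=
  ∀ {A B Q : C} (c : A ⨯ B ⟶ Q) {S : C} (x y : S ⟶ A) (z : S ⟶ B),
    prod.lift x 0 ≫ c = prod.lift y 0 ≫ c → prod.lift x z ≫ c = prod.lift y z ≫ c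

/-- Condition (a), abbreviated. -/
def CondA (C : Type*) [Category C] [HasBinaryProducts C] : Prop :=
  ∀ {X X' Y Y' : C} (f : X ⟶ X') (g : Y ⟶ Y'), IsRegEpi f → IsIso g → IsRegEpi (prod.map f g)

lemma map_id_right_eq {T X Y : C} (u : T ⟶ X) :
    prod.map u (𝟙 Y) = prod.lift (prod.fst ≫ u) prod.snd := by
  apply Limits.prod.hom_ext <;> simp [prod.lift_fst, prod.lift_snd]

lemma map_id_left_eq {T X Y : C} (u : T ⟶ Y) :
    prod.map (𝟙 X) u = prod.lift prod.fst (prod.snd ≫ u) := by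
  apply Limits.prod.hom_ext <;> simp [prod.lift_fst, prod.lift_snd]

/-- Key factorization: anything coequalizing `u ⨯ 1, v ⨯ 1` factors through `q ⨯ 1`. -/
lemma factor_left (hA : CondA C) (hB : CondB C)
    {T X X' : C} {u v : T ⟶ X} {q : X ⟶ X'} (hq : IsCoeq u v q) (Y : C)
    {Z : C} (h : X ⨯ Y ⟶ Z)
    (hh : prod.map u (𝟙 Y) ≫ h = prod.map v (𝟙 Y) ≫ h) :
    ∃ h₁ : X' ⨯ Y ⟶ Z, prod.map q (𝟙 Y) ≫ h₁ = h := by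
  obtain ⟨W, a, b, hco⟩ := hA q (𝟙 Y) ⟨T, u, v, hq⟩ inferInstance
  have hcond : a ≫ prod.map q (𝟙 Y) = b ≫ prod.map q (𝟙 Y) := hco.1
  have ha2 : a ≫ prod.snd = b ≫ prod.snd := by
    have := congrArg (· ≫ (prod.snd : X' ⨯ Y ⟶ Y)) hcond
    simpa using this
  have haq : (a ≫ prod.fst) ≫ q = (b ≫ prod.fst) ≫ q := by
    have := congrArg (· ≫ (prod.fst : X' ⨯ Y ⟶ X')) hcond
    simpa using this
  -- h₀ := (1, 0) ≫ h factors through q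
  have hu0 : u ≫ prod.lift (𝟙 X) (0 : X ⟶ Y) ≫ h = v ≫ prod.lift (𝟙 X) (0 : X ⟶ Y) ≫ h := by
    have e : ∀ w : T ⟶ X, w ≫ prod.lift (𝟙 X) (0 : X ⟶ Y) =
        prod.lift (𝟙 T) (0 : T ⟶ Y) ≫ prod.map w (𝟙 Y) := by
      intro w; rw [prod.comp_lift, prod.lift_map]; simp
    rw [← Category.assoc, ← Category.assoc, e u, e v, Category.assoc, Category.assoc, hh]
  obtain ⟨t, ht⟩ := hq.desc (prod.lift (𝟙 X) (0 : X ⟶ Y) ≫ h) hu0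
  have key0 : prod.lift (a ≫ prod.fst) (0 : W ⟶ Y) ≫ h =
      prod.lift (b ≫ prod.fst) (0 : W ⟶ Y) ≫ h := by
    have e : ∀ w : W ⟶ X, prod.lift w (0 : W ⟶ Y) ≫ h = w ≫ q ≫ t := by
      intro w
      rw [ht, ← Category.assoc, prod.comp_lift, Category.comp_id, comp_zero]
    rw [e, e, ← Category.assoc, ← Category.assoc, haq]
  have key := hB h (a ≫ prod.fst) (b ≫ prod.fst) (a ≫ prod.snd) key0
  have hab : a ≫ h = b ≫ h := by
    have ea : prod.lift (a ≫ prod.fst) (a ≫ prod.snd) = a := by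
      apply Limits.prod.hom_ext <;> simp [prod.lift_fst, prod.lift_snd]
    have eb : prod.lift (b ≫ prod.fst) (a ≫ prod.snd) = b := by
      apply Limits.prod.hom_ext <;> simp [ha2, prod.lift_fst, prod.lift_snd]
    rw [← ea, ← eb]
    exact key
  obtain ⟨h₁, hh₁⟩ := hco.desc h hab
  exact ⟨h₁, hh₁⟩

/-- Symmetric version, via the braiding. -/
lemma factor_right (hA : CondA C) (hB : CondB C)
    {T Y Y' : C} {u v : T ⟶ Y} {q : Y ⟶ Y'} (hq : IsCoeq u v q) (X : C)
    {Z : C} (h : X ⨯ Y ⟶ Z)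
    (hh : prod.map (𝟙 X) u ≫ h = prod.map (𝟙 X) v ≫ h) :
    ∃ h₁ : X ⨯ Y' ⟶ Z, prod.map (𝟙 X) q ≫ h₁ = h := by
  set h' : Y ⨯ X ⟶ Z := (prod.braiding Y X).hom ≫ h with hdef
  have hh' : prod.map u (𝟙 X) ≫ h' = prod.map v (𝟙 X) ≫ h' := by
    rw [hdef, ← Category.assoc, ← Category.assoc, braid_natural,
      braid_natural, Category.assoc, Category.assoc, hh]
  obtain ⟨k, hk⟩ := factor_left hA hB hq X h' hh'
  refine ⟨(prod.braiding X Y').hom ≫ k, ?_⟩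
  rw [← Category.assoc, braid_natural, Category.assoc, hk, hdef,
    ← Category.assoc, prod.symmetry, Category.id_comp]


/-- Main existence step for the converse. -/
lemma main_ex (hA : CondA C) (hB : CondB C)
    {T₁ T₂ X X' Y Y' : C} {u v : T₁ ⟶ X} {u' v' : T₂ ⟶ Y} {q₁ : X ⟶ X'} {q₂ : Y ⟶ Y'}
    (hq₁ : IsCoeq u v q₁) (hq₂ : IsCoeq u' v' q₂) {Z : C} (h : X ⨯ Y ⟶ Z)
    (hh : prod.map u u' ≫ h = prod.map v v' ≫ h) :
    ∃ k : X' ⨯ Y' ⟶ Z, prod.map q₁ q₂ ≫ k = h := by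
  have stepA : prod.map u (𝟙 Y) ≫ h = prod.map v (𝟙 Y) ≫ h := by
    have h0 : prod.lift ((prod.fst : T₁ ⨯ Y ⟶ T₁) ≫ u) (0 : T₁ ⨯ Y ⟶ Y) ≫ h
        = prod.lift (prod.fst ≫ v) 0 ≫ h := by
      have e : ∀ (w : T₁ ⟶ X) (w' : T₂ ⟶ Y),
          prod.lift (prod.fst : T₁ ⨯ Y ⟶ T₁) (0 : T₁ ⨯ Y ⟶ T₂) ≫ prod.map w w'
            = prod.lift (prod.fst ≫ w) 0 := by
        intro w w'; rw [prod.lift_map, zero_comp]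
      rw [← e u u', ← e v v', Category.assoc, Category.assoc, hh]
    have key := hB h _ _ (prod.snd : T₁ ⨯ Y ⟶ Y) h0
    rwa [map_id_right_eq u, map_id_right_eq v]
  have hbr : ∀ {S : C} (x : S ⟶ Y) (z : S ⟶ X),
      prod.lift x z ≫ ((prod.braiding Y X).hom ≫ h) = prod.lift z x ≫ h := by
    intro S x z
    rw [← Category.assoc]
    congr 1
    apply Limits.prod.hom_ext <;> simp [prod.lift_fst, prod.lift_snd]
  have stepC : prod.map (𝟙 X) u' ≫ h = prod.map (𝟙 X) v' ≫ h := by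
    have h0 : prod.lift ((prod.snd : X ⨯ T₂ ⟶ T₂) ≫ u') (0 : X ⨯ T₂ ⟶ X)
          ≫ ((prod.braiding Y X).hom ≫ h)
        = prod.lift (prod.snd ≫ v') 0 ≫ ((prod.braiding Y X).hom ≫ h) := by
      rw [hbr, hbr]
      have e : ∀ (w : T₁ ⟶ X) (w' : T₂ ⟶ Y),
          prod.lift (0 : X ⨯ T₂ ⟶ X) ((prod.snd : X ⨯ T₂ ⟶ T₂) ≫ w')
            = prod.snd ≫ (prod.lift (0 : T₂ ⟶ T₁) (𝟙 T₂) ≫ prod.map w w') := by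
        intro w w'
        rw [prod.lift_map, zero_comp, Category.id_comp, prod.comp_lift, comp_zero]
      rw [e u u', e v v']
      simp only [Category.assoc]
      rw [hh]
    have key := hB ((prod.braiding Y X).hom ≫ h) _ _ (prod.fst : X ⨯ T₂ ⟶ X) h0
    rw [hbr, hbr] at key
    rwa [map_id_left_eq u', map_id_left_eq v']
  obtain ⟨h₁, hB1⟩ := factor_left hA hB hq₁ Y h stepA
  obtain ⟨W₂, a₂, b₂, hco₂⟩ := hA q₁ (𝟙 T₂) ⟨_, _, _, hq₁⟩ inferInstance
  haveI : Epi (prod.map q₁ (𝟙 T₂)) := hco₂.epi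
  have stepD : prod.map (𝟙 X') u' ≫ h₁ = prod.map (𝟙 X') v' ≫ h₁ := by
    rw [← cancel_epi (prod.map q₁ (𝟙 T₂))]
    calc prod.map q₁ (𝟙 T₂) ≫ prod.map (𝟙 X') u' ≫ h₁
        = prod.map (𝟙 X) u' ≫ prod.map q₁ (𝟙 Y) ≫ h₁ := by
          rw [← Category.assoc, ← Category.assoc, prod.map_map, prod.map_map]
          simp
      _ = prod.map (𝟙 X) u' ≫ h := by rw [hB1]
      _ = prod.map (𝟙 X) v' ≫ h := stepC
      _ = prod.map (𝟙 X) v' ≫ prod.map q₁ (𝟙 Y) ≫ h₁ := by rw [hB1]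
      _ = prod.map q₁ (𝟙 T₂) ≫ prod.map (𝟙 X') v' ≫ h₁ := by
          rw [← Category.assoc, ← Category.assoc, prod.map_map, prod.map_map]
          simp
  obtain ⟨h₂, hB2⟩ := factor_right hA hB hq₂ X' h₁ stepD
  refine ⟨h₂, ?_⟩
  have e : prod.map q₁ (𝟙 Y) ≫ prod.map (𝟙 X') q₂ = prod.map q₁ q₂ := by
    rw [prod.map_map]; simp
  rw [← e, Category.assoc, hB2, hB1]

end Aux

theorem stmt4 {C : Type*} [Category C] [HasFiniteLimits C] [HasCoequalizers C]
    [HasZeroObject C] [HasZeroMorphisms C] :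
    PropertyP C ↔
      ((∀ {X X' Y Y' : C} (f : X ⟶ X') (g : Y ⟶ Y'), IsRegEpi f → IsIso g →
          IsRegEpi (prod.map f g)) ∧
       -- every effective equivalence relation `R` on a product `A ⨯ B` is the kernel
       -- pair of some morphism `c`; two generalized elements are `R`-related iff their
       -- composites with `c` agree
       (∀ {A B Q : C} (c : A ⨯ B ⟶ Q) {S : C} (x y : S ⟶ A) (z : S ⟶ B),
          prod.lift x 0 ≫ c = prod.lift y 0 ≫ c →
            prod.lift x z ≫ c = prod.lift y z ≫ c)) := by
  constructor
  · intro hP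
    refine ⟨?_, ?_⟩
    · intro X X' Y Y' f g hf hg
      obtain ⟨T, a, b, hco⟩ := hf
      exact ⟨T ⨯ Y, prod.map a (𝟙 Y), prod.map b (𝟙 Y),
        hP a b (𝟙 Y) (𝟙 Y) f g hco (isCoeq_id_id_of_iso g)⟩
    · intro A B Q c S x y z hxy
      have hq₁ : IsCoeq x y (coequalizer.π x y) :=
        ⟨coequalizer.condition x y, ⟨coequalizerIsCoequalizer x y⟩⟩
      have hPP := hP x y (0 : S ⟶ B) 0 (coequalizer.π x y) (𝟙 B) hq₁ (isCoeq_self_id 0)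
      have hc : prod.map x (0 : S ⟶ B) ≫ c = prod.map y 0 ≫ c := by
        have e : ∀ w : S ⟶ A, prod.map w (0 : S ⟶ B) = prod.fst ≫ prod.lift w 0 := by
          intro w; apply Limits.prod.hom_ext <;> simp [prod.lift_fst, prod.lift_snd]
        rw [e, e, Category.assoc, Category.assoc, hxy]
      obtain ⟨c', hc'⟩ := hPP.desc c hc
      have e2 : ∀ w : S ⟶ A, prod.lift w z ≫ prod.map (coequalizer.π x y) (𝟙 B)
          = prod.lift (w ≫ coequalizer.π x y) z := by
        intro w; rw [prod.lift_map, Category.comp_id]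
      rw [← hc', ← Category.assoc, ← Category.assoc, e2, e2, coequalizer.condition]
  · rintro ⟨hA, hB⟩
    intro T₁ T₂ X X' Y Y' u v u' v' q₁ q₂ hq₁ hq₂
    have w : prod.map u u' ≫ prod.map q₁ q₂ = prod.map v v' ≫ prod.map q₁ q₂ := by
      rw [prod.map_map, prod.map_map, hq₁.1, hq₂.1]
    obtain ⟨W₁, a₁, b₁, hco₁⟩ := hA q₁ (𝟙 Y) ⟨_, _, _, hq₁⟩ inferInstance
    haveI e1 : Epi (prod.map q₁ (𝟙 Y)) := hco₁.epi
    obtain ⟨W₂, a₂, b₂, hco₂⟩ := hA q₂ (𝟙 X') ⟨_, _, _, hq₂⟩ inferInstance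
    haveI e2 : Epi (prod.map q₂ (𝟙 X')) := hco₂.epi
    haveI e2' : Epi (prod.map (𝟙 X') q₂) := by
      constructor
      intro Z f g hfg
      have h1 : prod.map q₂ (𝟙 X') ≫ (prod.braiding Y' X').hom ≫ f
          = prod.map q₂ (𝟙 X') ≫ (prod.braiding Y' X').hom ≫ g := by
        rw [braid_natural_assoc, braid_natural_assoc, hfg]
      have h2 := (cancel_epi (prod.map q₂ (𝟙 X'))).1 h1
      exact (cancel_epi (prod.braiding Y' X').hom).1 h2
    haveI epiq : Epi (prod.map q₁ q₂) := by
      have e : prod.map q₁ (𝟙 Y) ≫ prod.map (𝟙 X') q₂ = prod.map q₁ q₂ := by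
        rw [prod.map_map]; simp
      rw [← e]; exact epi_comp _ _
    refine ⟨w, ⟨Cofork.IsColimit.mk _
      (fun s => (main_ex hA hB hq₁ hq₂ s.π s.condition).choose) (fun s => ?_) (fun s m hm => ?_)⟩⟩
    · simpa using (main_ex hA hB hq₁ hq₂ s.π s.condition).choose_spec
    · simp only [Cofork.π_ofπ] at hm
      exact (cancel_epi (prod.map q₁ q₂)).1
        (hm.trans (main_ex hA hB hq₁ hq₂ s.π s.condition).choose_spec.symm)
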